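/- Let ∂ : G₁ → G₀ be a crossed module and let (P, s) and (Q, t) be (G₁, G₀)-torsors, where Q is given the left G₁-action g · q := q g^{t(q)}. Consider the contracted product P ×^{G₁} Q, the quotient of P × Q by the relation (p g, q) ∼ (p, g · q) for g ∈ G₁. Then the map (p, q) ↦ s(p) t(q) descends to a well-defined map s ∧ t : P ×^{G₁} Q → G₀, and it is equivariant for the right G₁-action on P ×^{G₁} Q induced by [p, q] · g = [p, q g]: one has (s ∧ t)([p, q g]) = (s ∧ t)([p, q]) ∂(g). -/
import Mathlib


theorem stmt_17 {G₁ G₀ : Type*} [Group G₁] [Group G₀] (d : G₁ →* G₀) (act : G₁ → G₀ → G₁)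
    (hact_one : ∀ g, act g 1 = g)
    (hact_mul : ∀ g x y, act g (x * y) = act (act g x) y)
    (hact_hom : ∀ g g' x, act (g * g') x = act g x * act g' x)
    (hact_d : ∀ g x, d (act g x) = x⁻¹ * d g * x)
    (hact_peiffer : ∀ g h, act g (d h) = h⁻¹ * g * h)
    {P Q : Type*} (hP : Nonempty P) (hQ : Nonempty Q)
    (rP : P → G₁ → P)
    (hrP_one : ∀ p, rP p 1 = p)
    (hrP_mul : ∀ p g g', rP (rP p g) g' = rP p (g * g'))
    (hPfree : ∀ p g, rP p g = p → g = 1)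
    (hPtrans : ∀ p p' : P, ∃ g, rP p g = p')
    (s : P → G₀) (hs : ∀ p g, s (rP p g) = s p * d g)
    (rQ : Q → G₁ → Q)
    (hrQ_one : ∀ q, rQ q 1 = q)
    (hrQ_mul : ∀ q g g', rQ (rQ q g) g' = rQ q (g * g'))
    (hQfree : ∀ q g, rQ q g = q → g = 1)
    (hQtrans : ∀ q q' : Q, ∃ g, rQ q g = q')
    (t : Q → G₀) (ht : ∀ q g, t (rQ q g) = t q * d g) :
    let lQ : G₁ → Q → Q := fun g q => rQ q (act g (t q))
    let R : (P × Q) → (P × Q) → Prop :=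
      fun a b => ∃ g, a.1 = rP b.1 g ∧ b.2 = lQ g a.2
    ∃ f : Quot R → G₀,
      (∀ (p : P) (q : Q), f (Quot.mk R (p, q)) = s p * t q) ∧
      (∀ (p : P) (q : Q) (g : G₁),
        f (Quot.mk R (p, rQ q g)) = f (Quot.mk R (p, q)) * d g) := by
  intro lQ R
  refine ⟨Quot.lift (fun a => s a.1 * t a.2) ?_, fun p q => rfl, fun p q g => ?_⟩
  · rintro a b ⟨g, h1, h2⟩
    simp only [h1, h2, lQ, hs, ht, hact_d]
    group
  · show s p * t (rQ q g) = s p * t q * d g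
    rw [ht, mul_assoc]
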